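/- arXiv:2409.05683 — 2 statements merged into one kernel-verified Lean document; each statement's English description precedes it below -/
import Mathlib

section
/- The function λ ↦ 1 − (1−λ)^{1/λ + 1} is increasing on (0, 1/2]. -/
open Real Set

lemma g_hasDerivAt {l : ℝ} (hl : 0 < l) (hl2 : l < 1) :
    HasDerivAt (fun l : ℝ => (1 / l + 1) * Real.log (1 - l))
      ((-(l ^ 2)⁻¹) * Real.log (1 - l) + (1 / l + 1) * (-(1 - l)⁻¹)) l := by
  have h1 : (1 : ℝ) - l ≠ 0 := by linarith
  have hinv : HasDerivAt (fun l : ℝ => 1 / l + 1) (-(l ^ 2)⁻¹) l := by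
    simpa [one_div] using (hasDerivAt_inv hl.ne').add_const 1
  have hlog : HasDerivAt (fun l : ℝ => Real.log (1 - l)) (-(1 - l)⁻¹) l := by
    have hsub : HasDerivAt (fun l : ℝ => 1 - l) (-1 : ℝ) l := by
      simpa using (hasDerivAt_id l).const_sub 1
    have := (Real.hasDerivAt_log h1).comp l hsub
    simpa [Function.comp_def] using this
  simpa [Pi.mul_def] using hinv.mul hlog

lemma g_strictAnti : StrictAntiOn (fun l : ℝ => (1 / l + 1) * Real.log (1 - l))
    (Set.Ioc (0:ℝ) (1/2)) := by
  have hconv : Convex ℝ (Set.Ioc (0:ℝ) (1/2)) := convex_Ioc _ _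
  apply StrictAntiOn.mono (s := Set.Ioc (0:ℝ) (1/2)) ?_ le_rfl
  apply strictAntiOn_of_deriv_neg hconv
  · apply ContinuousOn.mul
    · exact ((continuousOn_const.div continuousOn_id (fun x hx => hx.1.ne')).add
        continuousOn_const)
    · apply ContinuousOn.log (by fun_prop)
      intro x hx
      have : x < 1 := lt_of_le_of_lt hx.2 (by norm_num)
      intro h; linarith [sub_eq_zero.mp h]
  · intro x hx
    rw [interior_Ioc] at hx
    obtain ⟨hx0, hx2⟩ := hx
    have hx1 : x < 1 := by linarith
    have hd := g_hasDerivAt hx0 hx1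
    rw [hd.deriv]
    have h1x : (0:ℝ) < 1 - x := by linarith
    -- key inequality: -log(1-x) < x/(1-x)
    have hlog : -Real.log (1 - x) < x / (1 - x) := by
      have h := Real.log_lt_sub_one_of_pos (x := (1 - x)⁻¹) (by positivity) ?_
      · rw [Real.log_inv] at h
        have : (1 - x)⁻¹ - 1 = x / (1 - x) := by field_simp; ring
        linarith [this ▸ h]
      · intro h
        have := inv_eq_one.mp h
        linarith
    have hx2pos : (0:ℝ) < x ^ 2 := by positivity
    rw [neg_mul, mul_neg]
    have h2 : (x ^ 2)⁻¹ * (-Real.log (1 - x)) < (x ^ 2)⁻¹ * (x / (1 - x)) :=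
      mul_lt_mul_of_pos_left hlog (inv_pos.mpr hx2pos)
    have h3 : (x ^ 2)⁻¹ * (x / (1 - x)) ≤ (1 / x + 1) * (1 - x)⁻¹ := by
      have e1 : (x ^ 2)⁻¹ * (x / (1 - x)) = 1 / (x * (1 - x)) := by
        field_simp
      have e2 : (1 / x + 1) * (1 - x)⁻¹ = (1 + x) / (x * (1 - x)) := by
        field_simp
      rw [e1, e2, div_le_div_iff₀ (by positivity) (by positivity)]
      nlinarith
    have h4 : (x ^ 2)⁻¹ * Real.log (1 - x) = -((x ^ 2)⁻¹ * (-Real.log (1 - x))) := by ring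
    linarith

theorem strictMonoOn_one_sub_rpow :
    StrictMonoOn (fun l : ℝ => 1 - (1 - l) ^ (1 / l + 1)) (Set.Ioc (0:ℝ) (1/2)) := by
  intro x hx y hy hxy
  have hx1 : (0:ℝ) < 1 - x := by have := hx.2; have := hx.1; norm_num at *; linarith
  have hy1 : (0:ℝ) < 1 - y := by have := hy.2; have := hy.1; norm_num at *; linarith
  have hrx : (1 - x) ^ (1 / x + 1) = Real.exp ((1 / x + 1) * Real.log (1 - x)) := by
    rw [Real.rpow_def_of_pos hx1]; ring_nf
  have hry : (1 - y) ^ (1 / y + 1) = Real.exp ((1 / y + 1) * Real.log (1 - y)) := by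
    rw [Real.rpow_def_of_pos hy1]; ring_nf
  simp only [hrx, hry]
  have := g_strictAnti hx hy hxy
  have := Real.exp_lt_exp.mpr this
  linarith
end

section
/- Let n ≥ 1 and a ≥ 1 be integers, let p := ⌊n/a⌋, and for k ∈ {0,…,p−1} set λ_k := 1/(n − k·a). Fix ε ∈ (0,1) and let k₀ := ⌊(1−ε)p⌋. Define μ_m := λ_{⌊(m−1)/a⌋} for m ∈ {1,…,k₀·a}. Then ∑_{m=1}^{k₀·a} |1/(n−m+1) − μ_m| ≤ a/(n − k₀·a) ≤ a/(εn). -/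
lemma discount_aux (n a : ℕ) (hn : 1 ≤ n) (ha : 1 ≤ a) :
    ∀ K : ℕ, K * a < n →
      ∑ m ∈ Finset.Icc 1 (K * a),
        |1 / ((n : ℝ) - (m : ℝ) + 1) - 1 / ((n : ℝ) - (((m - 1) / a : ℕ) : ℝ) * (a : ℝ))|
      ≤ (a : ℝ) / ((n : ℝ) - (K : ℝ) * (a : ℝ)) - (a : ℝ) / n := by
  intro K
  induction K with
  | zero => simp
  | succ K ih =>
    intro hK1
    have hK : K * a < n := lt_of_le_of_lt (Nat.mul_le_mul_right a (Nat.le_succ K)) hK1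
    have hKr : (K : ℝ) * a < n := by exact_mod_cast hK
    have hK1r : ((K : ℝ) + 1) * a < n := by exact_mod_cast hK1
    have har : (1 : ℝ) ≤ a := by exact_mod_cast ha
    have key : Finset.Icc 1 ((K + 1) * a) = Finset.Ioc 0 ((K + 1) * a) := by
      rw [← Finset.Icc_add_one_left_eq_Ioc]; rfl
    have key2 : Finset.Icc 1 (K * a) = Finset.Ioc 0 (K * a) := by
      rw [← Finset.Icc_add_one_left_eq_Ioc]; rfl
    rw [key, ← Finset.sum_Ioc_consecutive _ (Nat.zero_le (K * a))
      (Nat.mul_le_mul_right a (Nat.le_succ K)), ← key2]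
    have hblock : ∑ m ∈ Finset.Ioc (K * a) ((K + 1) * a),
        |1 / ((n : ℝ) - (m : ℝ) + 1) - 1 / ((n : ℝ) - (((m - 1) / a : ℕ) : ℝ) * (a : ℝ))|
        ≤ (a : ℝ) * (1 / ((n : ℝ) - ((K : ℝ) + 1) * a) - 1 / ((n : ℝ) - (K : ℝ) * a)) := by
      have hcard : (Finset.Ioc (K * a) ((K + 1) * a)).card = a := by
        rw [Nat.card_Ioc, Nat.succ_mul]; omega
      calc ∑ m ∈ Finset.Ioc (K * a) ((K + 1) * a),
            |1 / ((n : ℝ) - (m : ℝ) + 1) - 1 / ((n : ℝ) - (((m - 1) / a : ℕ) : ℝ) * (a : ℝ))|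
          ≤ ∑ m ∈ Finset.Ioc (K * a) ((K + 1) * a),
            (1 / ((n : ℝ) - ((K : ℝ) + 1) * a) - 1 / ((n : ℝ) - (K : ℝ) * a)) := by
            apply Finset.sum_le_sum
            intro m hm
            simp only [Finset.mem_Ioc] at hm
            have hdiv : (m - 1) / a = K := by
              apply Nat.div_eq_of_lt_le <;> omega
            rw [hdiv]
            have hm1 : (K : ℝ) * a + 1 ≤ (m : ℝ) := by exact_mod_cast hm.1
            have hm2 : (m : ℝ) ≤ ((K : ℝ) + 1) * a := by exact_mod_cast hm.2
            have h1 : (0 : ℝ) < (n : ℝ) - ((K : ℝ) + 1) * a := by linarith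
            have h2 : (0 : ℝ) < (n : ℝ) - (m : ℝ) + 1 := by linarith
            have h3 : (0 : ℝ) < (n : ℝ) - (K : ℝ) * a := by linarith
            have hle : 1 / ((n : ℝ) - (K : ℝ) * a) ≤ 1 / ((n : ℝ) - (m : ℝ) + 1) :=
              one_div_le_one_div_of_le h2 (by linarith)
            rw [abs_of_nonneg (by linarith)]
            have : 1 / ((n : ℝ) - (m : ℝ) + 1) ≤ 1 / ((n : ℝ) - ((K : ℝ) + 1) * a) :=
              one_div_le_one_div_of_le h1 (by linarith)
            linarith
        _ = (a : ℝ) * (1 / ((n : ℝ) - ((K : ℝ) + 1) * a) - 1 / ((n : ℝ) - (K : ℝ) * a)) := by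
            rw [Finset.sum_const, hcard, nsmul_eq_mul]
    have := ih hK
    push_cast
    calc _ ≤ ((a : ℝ) / ((n : ℝ) - (K : ℝ) * a) - (a : ℝ) / n)
          + (a : ℝ) * (1 / ((n : ℝ) - ((K : ℝ) + 1) * a) - 1 / ((n : ℝ) - (K : ℝ) * a)) := by
          push_cast at this hblock ⊢
          exact add_le_add this hblock
      _ = (a : ℝ) / ((n : ℝ) - ((K : ℝ) + 1) * a) - (a : ℝ) / n := by
          rw [mul_sub, mul_one_div, mul_one_div]; ring

theorem discount_factor_error_sum (n a : ℕ) (hn : 1 ≤ n) (ha : 1 ≤ a)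
    (ε : ℝ) (hε : ε ∈ Set.Ioo (0:ℝ) 1)
    (k₀ : ℕ) (hk₀ : k₀ = ⌊(1 - ε) * ((n / a : ℕ) : ℝ)⌋₊) (h : k₀ * a < n) :
    ∑ m ∈ Finset.Icc 1 (k₀ * a),
        |1 / ((n : ℝ) - (m : ℝ) + 1) - 1 / ((n : ℝ) - (((m - 1) / a : ℕ) : ℝ) * (a : ℝ))|
      ≤ (a : ℝ) / ((n : ℝ) - (k₀ : ℝ) * (a : ℝ)) ∧
    (a : ℝ) / ((n : ℝ) - (k₀ : ℝ) * (a : ℝ)) ≤ (a : ℝ) / (ε * (n : ℝ)) := by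
  obtain ⟨hε0, hε1⟩ := hε
  have hnr : (1 : ℝ) ≤ n := by exact_mod_cast hn
  have har : (0 : ℝ) ≤ a := by positivity
  have hεn : 0 < ε * n := by positivity
  have hkle : (k₀ : ℝ) ≤ (1 - ε) * ((n / a : ℕ) : ℝ) := by
    rw [hk₀]
    exact Nat.floor_le (mul_nonneg (by linarith) (Nat.cast_nonneg _))
  have hpa : ((n / a : ℕ) : ℝ) * a ≤ n := by exact_mod_cast Nat.div_mul_le_self n a
  have hka : (k₀ : ℝ) * a ≤ (1 - ε) * n := by
    have h1 : (k₀ : ℝ) * a ≤ (1 - ε) * (((n / a : ℕ) : ℝ) * a) := by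
      rw [← mul_assoc]
      exact mul_le_mul_of_nonneg_right hkle har
    have h2 : (1 - ε) * (((n / a : ℕ) : ℝ) * a) ≤ (1 - ε) * n :=
      mul_le_mul_of_nonneg_left hpa (by linarith)
    linarith
  have hεle : ε * n ≤ (n : ℝ) - (k₀ : ℝ) * a := by nlinarith
  constructor
  · have := discount_aux n a hn ha k₀ h
    have hpos : 0 < (a : ℝ) / n := by
      have : (0:ℝ) < a := by exact_mod_cast ha
      positivity
    linarith
  · exact div_le_div_of_nonneg_left har hεn hεle
end
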